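/- The polynomial P(x) = 6250x^8 − 15750x^7 + 27125x^6 − 41175x^5 + 36030x^4 − 34560x^3 + 17248x^2 − 9216x + 2048 satisfies P(0) > 0, P(1) < 0 and P(2) > 0; consequently P has at least two distinct positive real roots, one in the open interval (0, 1) and one in the open interval (1, 2). -/
import Mathlib


noncomputable def P (x : ℝ) : ℝ :=
  6250*x^8 - 15750*x^7 + 27125*x^6 - 41175*x^5 + 36030*x^4
  - 34560*x^3 + 17248*x^2 - 9216*x + 2048

lemma P_cont : Continuous P := by
  unfold P; continuity

theorem stmt_11 :
    0 < P 0 ∧ P 1 < 0 ∧ 0 < P 2 ∧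
    ∃ a b : ℝ, 0 < a ∧ a < 1 ∧ P a = 0 ∧ 1 < b ∧ b < 2 ∧ P b = 0 := by
  have h0 : P 0 = 2048 := by norm_num [P]
  have h1 : P 1 = -12000 := by norm_num [P]
  have h2 : P 2 = 355008 := by norm_num [P]
  refine ⟨by rw [h0]; norm_num, by rw [h1]; norm_num, by rw [h2]; norm_num, ?_⟩
  have ha : ∃ a ∈ Set.Ioo (0:ℝ) 1, P a = 0 := by
    have := intermediate_value_Ioo' (a := (0:ℝ)) (b := 1) (by norm_num)
      (P_cont.continuousOn)
    have h : (0:ℝ) ∈ Set.Ioo (P 1) (P 0) := by rw [h0, h1]; constructor <;> norm_num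
    obtain ⟨a, ha, hpa⟩ := this h
    exact ⟨a, ha, hpa⟩
  have hb : ∃ b ∈ Set.Ioo (1:ℝ) 2, P b = 0 := by
    have := intermediate_value_Ioo (a := (1:ℝ)) (b := 2) (by norm_num)
      (P_cont.continuousOn)
    have h : (0:ℝ) ∈ Set.Ioo (P 1) (P 2) := by rw [h1, h2]; constructor <;> norm_num
    obtain ⟨b, hb, hpb⟩ := this h
    exact ⟨b, hb, hpb⟩
  obtain ⟨a, ⟨ha1, ha2⟩, hpa⟩ := ha
  obtain ⟨b, ⟨hb1, hb2⟩, hpb⟩ := hb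
  exact ⟨a, b, ha1, ha2, hpa, hb1, hb2, hpb⟩
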